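/- For a vector-valued alternating k-form φ, a scalar p-form τ, and a form ψ, the interior product satisfies the Leibniz-type rule i_φ(τ∧ψ) = (i_φ τ)∧ψ + (−1)^{(k−1)p} τ∧(i_φ ψ). -/

import Mathlib

set_option linter.unusedSectionVars false

variable {K V W : Type*} [Field K] [CharZero K] [AddCommGroup V] [Module K V]
  [AddCommGroup W] [Module K W]

/-- Interior product of a vector-valued k-form φ into an (l+1)-form ψ:
(i_φ ψ)(x_1,…,x_{k+l}) = (1/(k! l!)) Σ_σ sgn(σ) ψ(φ(x_{σ(1)},…,x_{σ(k)}), x_{σ(k+1)},…). -/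
def interiorProd (k l : ℕ) (φ : (Fin k → V) → V) (ψ : (Fin (l + 1) → V) → W) :
    (Fin (k + l) → V) → W :=
  fun x => ((k.factorial * l.factorial : K))⁻¹ •
    ∑ σ : Equiv.Perm (Fin (k + l)), ((Equiv.Perm.sign σ : ℤ) : K) •
      ψ (Fin.cons (φ (fun i => x (σ (Fin.castAdd l i))))
        (fun i => x (σ (Fin.natAdd k i))))

/-- Wedge of a scalar p-form τ with a (possibly vector-valued) k-form φ:
(τ∧φ)(x_1,…,x_{p+k}) = (1/(p! k!)) Σ_σ sgn(σ) τ(x_{σ(1)},…,x_{σ(p)}) φ(x_{σ(p+1)},…). -/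
def wedgeProd (p k : ℕ) (τ : (Fin p → V) → K) (φ : (Fin k → V) → W) :
    (Fin (p + k) → V) → W :=
  fun x => ((p.factorial * k.factorial : K))⁻¹ •
    ∑ σ : Equiv.Perm (Fin (p + k)), ((Equiv.Perm.sign σ : ℤ) : K) •
      (τ (fun i => x (σ (Fin.castAdd k i))) • φ (fun i => x (σ (Fin.natAdd p i))))

open Equiv Finset

namespace ILaux

variable {K : Type*} [Field K] {W : Type*} [AddCommGroup W] [Module K W]

lemma sgnK_mul {α : Type*} [DecidableEq α] [Fintype α] (σ ρ : Perm α) :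
    ((Perm.sign (σ * ρ) : ℤ) : K) = ((Perm.sign σ : ℤ) : K) * ((Perm.sign ρ : ℤ) : K) := by
  rw [map_mul, Units.val_mul, Int.cast_mul]

lemma sgnK_sq {α : Type*} [DecidableEq α] [Fintype α] (σ : Perm α) :
    ((Perm.sign σ : ℤ) : K) * ((Perm.sign σ : ℤ) : K) = 1 := by
  rw [← Int.cast_mul, ← Units.val_mul, Int.units_mul_self, Units.val_one, Int.cast_one]

lemma sum_mulRight {α : Type*} [DecidableEq α] [Fintype α] {M : Type*} [AddCommMonoid M]
    (g : Perm α) (f : Perm α → M) :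
    ∑ σ : Perm α, f (σ * g) = ∑ σ : Perm α, f σ :=
  Fintype.sum_bijective _ (Equiv.mulRight g).bijective _ _ (fun _ => rfl)

lemma sum_sgn_smul_mul {α : Type*} [DecidableEq α] [Fintype α] (g : Perm α)
    (f : Perm α → W) :
    ∑ σ : Perm α, ((Perm.sign σ : ℤ) : K) • f (σ * g)
      = ((Perm.sign g : ℤ) : K) • ∑ σ : Perm α, ((Perm.sign σ : ℤ) : K) • f σ := by
  rw [smul_sum]
  rw [← sum_mulRight g (fun σ => ((Perm.sign g : ℤ) : K) • ((Perm.sign σ : ℤ) : K) • f σ)]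
  refine Finset.sum_congr rfl fun σ _ => ?_
  rw [smul_smul, sgnK_mul]
  congr 1
  rw [show ((Perm.sign g : ℤ) : K) * (((Perm.sign σ : ℤ) : K) * ((Perm.sign g : ℤ) : K))
      = ((Perm.sign σ : ℤ) : K) * (((Perm.sign g : ℤ) : K) * ((Perm.sign g : ℤ) : K)) from by ring,
    sgnK_sq, mul_one]




/-- lift of a permutation of `Fin b` to `Fin (a+b)` acting on the right block -/
def liftR (a b : ℕ) (e : Perm (Fin b)) : Perm (Fin (a + b)) :=
  finSumFinEquiv.permCongr ((Equiv.refl (Fin a)).sumCongr e)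

def liftL (a b : ℕ) (e : Perm (Fin a)) : Perm (Fin (a + b)) :=
  finSumFinEquiv.permCongr (e.sumCongr (Equiv.refl (Fin b)))

@[simp] lemma liftR_castAdd (a b : ℕ) (e : Perm (Fin b)) (i : Fin a) :
    liftR a b e (Fin.castAdd b i) = Fin.castAdd b i := by
  simp [liftR, Equiv.permCongr_apply]

@[simp] lemma liftR_natAdd (a b : ℕ) (e : Perm (Fin b)) (i : Fin b) :
    liftR a b e (Fin.natAdd a i) = Fin.natAdd a (e i) := by
  simp [liftR, Equiv.permCongr_apply]

@[simp] lemma liftL_castAdd (a b : ℕ) (e : Perm (Fin a)) (i : Fin a) :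
    liftL a b e (Fin.castAdd b i) = Fin.castAdd b (e i) := by
  simp [liftL, Equiv.permCongr_apply]

@[simp] lemma liftL_natAdd (a b : ℕ) (e : Perm (Fin a)) (i : Fin b) :
    liftL a b e (Fin.natAdd a i) = Fin.natAdd a i := by
  simp [liftL, Equiv.permCongr_apply]

@[simp] lemma sign_liftR (a b : ℕ) (e : Perm (Fin b)) :
    Perm.sign (liftR a b e) = Perm.sign e := by
  simp [liftR, Equiv.Perm.sign_permCongr, Equiv.Perm.sign_sumCongr]

@[simp] lemma sign_liftL (a b : ℕ) (e : Perm (Fin a)) :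
    Perm.sign (liftL a b e) = Perm.sign e := by
  simp [liftL, Equiv.Perm.sign_permCongr, Equiv.Perm.sign_sumCongr]

lemma liftL_apply_val (a b : ℕ) (e : Perm (Fin a)) (s : Fin (a + b)) :
    ((liftL a b e) s).val = if h : s.val < a then (e ⟨s.val, h⟩).val else s.val := by
  split_ifs with h
  · have hs : s = Fin.castAdd b ⟨s.val, h⟩ := by ext; simp
    conv_lhs => rw [hs, liftL_castAdd]
    simp
  · have hs : s = Fin.natAdd a ⟨s.val - a, by have := s.isLt; omega⟩ := by
      ext; simp; omega
    conv_lhs => rw [hs, liftL_natAdd]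
    simp
    omega




/-- lift of `e : Perm (Fin l)` to `Fin (l+1)` fixing `0`. -/
def d0 {l : ℕ} (e : Perm (Fin l)) : Perm (Fin (l + 1)) :=
  Equiv.Perm.decomposeFin.symm (0, e)

@[simp] lemma d0_zero {l : ℕ} (e : Perm (Fin l)) : d0 e 0 = 0 :=
  Equiv.Perm.decomposeFin_symm_apply_zero 0 e

@[simp] lemma d0_succ {l : ℕ} (e : Perm (Fin l)) (i : Fin l) :
    d0 e i.succ = (e i).succ := by
  rw [d0, Equiv.Perm.decomposeFin_symm_apply_succ, Equiv.swap_self]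
  rfl

@[simp] lemma sign_d0 {l : ℕ} (e : Perm (Fin l)) : Perm.sign (d0 e) = Perm.sign e := by
  rw [d0, Equiv.Perm.decomposeFin.symm_sign, if_pos rfl, one_mul]

lemma d0_apply_ne {l : ℕ} (e : Perm (Fin l)) (t : Fin (l + 1)) (h : t.val ≠ 0) :
    d0 e t = (e ⟨t.val - 1, by have := t.isLt; omega⟩).succ := by
  have ht : t = (Fin.mk (n := l) (t.val - 1) (by have := t.isLt; omega)).succ := by
    ext; simp; omega
  conv_lhs => rw [ht, d0_succ]

lemma cons_eval_ne {l : ℕ} {α : Type*} (v : α) (z : Fin l → α) (t : Fin (l + 1))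
    (h : t.val ≠ 0) :
    Fin.cons (α := fun _ => α) v z t = z ⟨t.val - 1, by have := t.isLt; omega⟩ := by
  have ht : t = (Fin.mk (n := l) (t.val - 1) (by have := t.isLt; omega)).succ := by
    ext; simp; omega
  conv_lhs => rw [ht, Fin.cons_succ]

lemma cons_eval_zero {l : ℕ} {α : Type*} (v : α) (z : Fin l → α) (t : Fin (l + 1))
    (h : t.val = 0) : Fin.cons (α := fun _ => α) v z t = v := by
  have ht : t = 0 := by ext; simpa using h
  rw [ht, Fin.cons_zero]

/-- the insertion parametrization of `Perm (Fin (l+1))` -/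
def ins (l : ℕ) (j : Fin (l + 1)) (e : Perm (Fin l)) : Perm (Fin (l + 1)) :=
  d0 e * Equiv.swap 0 j

lemma ins_bijective (l : ℕ) :
    Function.Bijective (fun je : Fin (l + 1) × Perm (Fin l) => ins l je.1 je.2) := by
  rw [Fintype.bijective_iff_injective_and_card]
  constructor
  · rintro ⟨j, e⟩ ⟨j', e'⟩ h
    simp only [ins] at h
    have h0 : ∀ (j : Fin (l+1)) (e : Perm (Fin l)), (d0 e * Equiv.swap 0 j) j = 0 := by
      intro j e
      simp [Equiv.Perm.mul_apply, Equiv.swap_apply_right]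
    have hj : j = j' := by
      have h1 : (d0 e * Equiv.swap 0 j) j = (d0 e' * Equiv.swap 0 j') j := by rw [h]
      rw [h0] at h1
      have h2 : Equiv.swap 0 j' j = 0 := by
        have h2' := h1
        rw [Equiv.Perm.mul_apply] at h2'
        have h3 : d0 e' (Equiv.swap 0 j' j) = d0 e' 0 := by rw [d0_zero]; exact h2'.symm
        exact (d0 e').injective h3
      rcases eq_or_ne j j' with h4 | h4
      · exact h4
      rcases eq_or_ne j 0 with h5 | h5
      · rw [h5, Equiv.swap_apply_left] at h2; exact (h5.trans h2.symm)
      · rw [Equiv.swap_apply_of_ne_of_ne h5 h4] at h2; exact absurd h2 h5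
    subst hj
    have he : d0 e = d0 e' := mul_right_cancel h
    have : e = e' := by
      ext i
      have h6 : (e i).succ = (e' i).succ := by
        have := congrArg (fun π : Perm (Fin (l+1)) => π i.succ) he
        simpa using this
      exact congrArg Fin.val (Fin.succ_injective _ h6)
    rw [this]
  · simp [Fintype.card_perm, Nat.factorial_succ]

/-- characterizations of `(Fin.cycleRange c)⁻¹`. -/
lemma cycInv_of_zero {n : ℕ} (c t : Fin n) (h : t.val = 0) :
    (Fin.cycleRange c)⁻¹ t = c := by
  cases n with
  | zero => exact t.elim0
  | succ m =>
    rw [Equiv.Perm.inv_eq_iff_eq, Fin.cycleRange_self]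
    ext; simpa using h

lemma cycInv_of_le {n : ℕ} (c t : Fin n) (h1 : t.val ≠ 0) (h2 : t.val ≤ c.val) :
    (Fin.cycleRange c)⁻¹ t = ⟨t.val - 1, by have := t.isLt; omega⟩ := by
  cases n with
  | zero => exact t.elim0
  | succ m =>
    rw [Equiv.Perm.inv_eq_iff_eq]
    have hlt : (⟨t.val - 1, by have := t.isLt; omega⟩ : Fin (m+1)) < c := by
      rw [Fin.lt_iff_val_lt_val]; simp; omega
    rw [Fin.cycleRange_of_lt hlt]
    ext
    rw [Fin.val_add_one_of_lt (lt_of_lt_of_le hlt (Fin.le_last c))]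
    simp; omega

lemma cycInv_of_gt {n : ℕ} (c t : Fin n) (h : c.val < t.val) :
    (Fin.cycleRange c)⁻¹ t = t := by
  cases n with
  | zero => exact t.elim0
  | succ m =>
    rw [Equiv.Perm.inv_eq_iff_eq, Fin.cycleRange_of_gt]
    rwa [Fin.lt_iff_val_lt_val]

@[simp] lemma sign_cycInv {n : ℕ} (c : Fin n) :
    Perm.sign (Fin.cycleRange c)⁻¹ = (-1) ^ c.val := by
  rw [map_inv, Fin.sign_cycleRange, ← inv_pow, Int.units_inv_eq_self]

lemma finRotate_pow_val {n m : ℕ} (i : Fin (n + 1)) :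
    (((finRotate (n + 1)) ^ m) i).val = (i.val + m) % (n + 1) := by
  induction m generalizing i with
  | zero => simp [Nat.mod_eq_of_lt i.isLt]
  | succ m ih =>
    rw [pow_succ, Equiv.Perm.mul_apply, ih (finRotate (n+1) i), finRotate_succ_apply]
    have h1 : (i + 1 : Fin (n+1)).val = (i.val + 1) % (n + 1) := by
      rw [Fin.add_def]; simp
    rw [h1, Nat.mod_add_mod]
    congr 1
    omega



variable {V : Type*} [AddCommGroup V] [Module K V]

lemma absorb_right (a b : ℕ) (f : (Fin (a + b) → V) → W) (x : Fin (a + b) → V) :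
    ∑ σ : Perm (Fin (a + b)), ∑ e : Perm (Fin b),
        ((Perm.sign σ : ℤ) : K) • ((Perm.sign e : ℤ) : K) •
          f (fun i => x (σ (liftR a b e i)))
      = ((b.factorial : K)) • ∑ σ : Perm (Fin (a + b)),
          ((Perm.sign σ : ℤ) : K) • f (fun i => x (σ i)) := by
  rw [Finset.sum_comm]
  have per_e : ∀ e : Perm (Fin b),
      (∑ σ : Perm (Fin (a + b)), ((Perm.sign σ : ℤ) : K) • ((Perm.sign e : ℤ) : K) •
        f (fun i => x (σ (liftR a b e i))))
      = ∑ σ : Perm (Fin (a + b)), ((Perm.sign σ : ℤ) : K) • f (fun i => x (σ i)) := by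
    intro e
    have step1 : (∑ σ : Perm (Fin (a + b)), ((Perm.sign σ : ℤ) : K) • ((Perm.sign e : ℤ) : K) •
        f (fun i => x (σ (liftR a b e i))))
        = ((Perm.sign e : ℤ) : K) • ∑ σ : Perm (Fin (a + b)), ((Perm.sign σ : ℤ) : K) •
          f (fun i => x ((σ * liftR a b e) i)) := by
      rw [smul_sum]
      refine Finset.sum_congr rfl fun σ _ => ?_
      rw [smul_comm]
      rfl
    rw [step1, sum_sgn_smul_mul (liftR a b e) (fun π => f (fun i => x (π i))),
      smul_smul, sign_liftR, sgnK_sq, one_smul]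
  rw [Finset.sum_congr rfl (fun e _ => per_e e), Finset.sum_const, Finset.card_univ,
    Fintype.card_perm, Fintype.card_fin, Nat.cast_smul_eq_nsmul]

lemma absorb_left (a b : ℕ) (f : (Fin (a + b) → V) → W) (x : Fin (a + b) → V) :
    ∑ σ : Perm (Fin (a + b)), ∑ e : Perm (Fin a),
        ((Perm.sign σ : ℤ) : K) • ((Perm.sign e : ℤ) : K) •
          f (fun i => x (σ (liftL a b e i)))
      = ((a.factorial : K)) • ∑ σ : Perm (Fin (a + b)),
          ((Perm.sign σ : ℤ) : K) • f (fun i => x (σ i)) := by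
  rw [Finset.sum_comm]
  have per_e : ∀ e : Perm (Fin a),
      (∑ σ : Perm (Fin (a + b)), ((Perm.sign σ : ℤ) : K) • ((Perm.sign e : ℤ) : K) •
        f (fun i => x (σ (liftL a b e i))))
      = ∑ σ : Perm (Fin (a + b)), ((Perm.sign σ : ℤ) : K) • f (fun i => x (σ i)) := by
    intro e
    have step1 : (∑ σ : Perm (Fin (a + b)), ((Perm.sign σ : ℤ) : K) • ((Perm.sign e : ℤ) : K) •
        f (fun i => x (σ (liftL a b e i))))
        = ((Perm.sign e : ℤ) : K) • ∑ σ : Perm (Fin (a + b)), ((Perm.sign σ : ℤ) : K) •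
          f (fun i => x ((σ * liftL a b e) i)) := by
      rw [smul_sum]
      refine Finset.sum_congr rfl fun σ _ => ?_
      rw [smul_comm]
      rfl
    rw [step1, sum_sgn_smul_mul (liftL a b e) (fun π => f (fun i => x (π i))),
      smul_smul, sign_liftL, sgnK_sq, one_smul]
  rw [Finset.sum_congr rfl (fun e _ => per_e e), Finset.sum_const, Finset.card_univ,
    Fintype.card_perm, Fintype.card_fin, Nat.cast_smul_eq_nsmul]


lemma cycInv_val {n : ℕ} (c t : Fin n) :
    ((Fin.cycleRange c)⁻¹ t).val
      = if t.val = 0 then c.val else if t.val ≤ c.val then t.val - 1 else t.val := by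
  split_ifs with h1 h2
  · rw [cycInv_of_zero _ _ h1]
  · rw [cycInv_of_le _ _ h1 h2]
  · rw [cycInv_of_gt _ _ (by omega)]

/-! ### inner splitting machinery, all over `Fin (p+1+q+1)` resp. `Fin (p+1+q)` -/

def cyc1 (p q : ℕ) (j' : Fin (p + 1)) : Perm (Fin (p + 1 + q)) :=
  (Fin.cycleRange ⟨j'.val - 1, by have := j'.isLt; omega⟩)⁻¹

def cyc2 (p q : ℕ) (j'' : Fin (q + 1)) : Perm (Fin (p + 1 + q)) :=
  (Fin.cycleRange ⟨p + j''.val, by have := j''.isLt; omega⟩)⁻¹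

lemma cyc1_val (p q : ℕ) (j' : Fin (p + 1)) (t : Fin (p + 1 + q)) :
    ((cyc1 p q j') t).val
      = if t.val = 0 then j'.val - 1 else if t.val ≤ j'.val - 1 then t.val - 1 else t.val := by
  rw [cyc1, cycInv_val]

lemma cyc2_val (p q : ℕ) (j'' : Fin (q + 1)) (t : Fin (p + 1 + q)) :
    ((cyc2 p q j'') t).val
      = if t.val = 0 then p + j''.val else if t.val ≤ p + j''.val then t.val - 1 else t.val := by
  rw [cyc2, cycInv_val]

lemma sign_cyc1 (p q : ℕ) (j' : Fin (p + 1)) :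
    Perm.sign (cyc1 p q j') = (-1) ^ (j'.val - 1) := by
  rw [cyc1, sign_cycInv]

lemma sign_cyc2 (p q : ℕ) (j'' : Fin (q + 1)) :
    Perm.sign (cyc2 p q j'') = (-1) ^ (p + j''.val) := by
  rw [cyc2, sign_cycInv]

def emb1 (p q : ℕ) : Fin p → Fin (p + 1 + q) := fun t => ⟨t.val, by have := t.isLt; omega⟩
def embP (p q : ℕ) : Fin (q + 1) → Fin (p + 1 + q) := fun b => ⟨p + b.val, by have := b.isLt; omega⟩
def emb2 (p q : ℕ) : Fin (p + 1) → Fin (p + 1 + q) := fun a => ⟨a.val, by have := a.isLt; omega⟩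
def embQ (p q : ℕ) : Fin q → Fin (p + 1 + q) := fun t => ⟨p + 1 + t.val, by have := t.isLt; omega⟩

/-- the first-block embedding `Fin (p+1) → Fin (p+1+q+1)` (defeq to `Fin.castAdd (q+1)`) -/
def embA (p q : ℕ) : Fin (p + 1) → Fin (p + 1 + q + 1) := fun a => ⟨a.val, by have := a.isLt; omega⟩
/-- the second-block embedding `Fin (q+1) → Fin (p+1+q+1)` (defeq to `Fin.natAdd (p+1)`) -/
def embB (p q : ℕ) : Fin (q + 1) → Fin (p + 1 + q + 1) := fun b => ⟨p + 1 + b.val, by have := b.isLt; omega⟩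

section inner

variable {p q : ℕ} (v : V) (z : Fin (p + 1 + q) → V)

lemma tauA (e : Perm (Fin (p + 1 + q))) (j' : Fin (p + 1)) :
    (fun a : Fin (p + 1) => Fin.cons (α := fun _ => V) v z
        ((ins (p + 1 + q) (embA p q j') e) (embA p q a)))
    = (Fin.cons v (fun t : Fin p => z ((e * cyc1 p q j') (emb1 p q t)))) ∘ (Fin.cycleRange j') := by
  have hjp : j'.val < p + 1 := j'.isLt
  funext a
  have hap : a.val < p + 1 := a.isLt
  simp only [Function.comp_apply, ins, Equiv.Perm.mul_apply]
  rcases eq_or_ne a j' with rfl | haj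
  · rw [Equiv.swap_apply_right, d0_zero, Fin.cycleRange_self,
      cons_eval_zero _ _ _ rfl, cons_eval_zero _ _ _ rfl]
  · have havj : a.val ≠ j'.val := fun h => haj (Fin.ext h)
    rcases eq_or_ne a.val 0 with ha0 | ha0
    · -- a = 0 < j'
      have hj0 : j'.val ≠ 0 := by omega
      have h1 : embA p q a = (0 : Fin (p + 1 + q + 1)) := Fin.ext (by simpa [embA] using ha0)
      rw [h1, Equiv.swap_apply_left,
        d0_apply_ne e _ (by simpa [embA] using hj0), Fin.cons_succ,
        Fin.cycleRange_of_lt (by rw [Fin.lt_iff_val_lt_val]; omega)]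
      have hv1 : (a + 1 : Fin (p + 1)).val = a.val + 1 := by
        rw [Fin.val_add_one_of_lt]
        rw [Fin.lt_iff_val_lt_val]; simp only [Fin.val_last]; omega
      rw [cons_eval_ne _ _ _ (by omega)]
      show z _ = z _
      congr 1
      show _ = e _
      congr 1
      ext
      rw [cyc1_val]
      simp only [emb1, embA, hv1]
      split_ifs <;> omega
    · -- a ≠ 0, a ≠ j'
      have h2 : embA p q a ≠ (0 : Fin (p + 1 + q + 1)) :=
        fun h => ha0 (by simpa [embA] using congrArg Fin.val h)
      have h3 : embA p q a ≠ embA p q j' :=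
        fun h => haj (Fin.ext (by simpa [embA] using congrArg Fin.val h))
      rw [Equiv.swap_apply_of_ne_of_ne h2 h3,
        d0_apply_ne e _ (by simpa [embA] using ha0), Fin.cons_succ]
      rcases lt_or_gt_of_ne haj with h | h
      · -- a < j'
        rw [Fin.cycleRange_of_lt h]
        have hv1 : (a + 1 : Fin (p + 1)).val = a.val + 1 := by
          rw [Fin.val_add_one_of_lt]
          rw [Fin.lt_iff_val_lt_val]; simp only [Fin.val_last]
          have := Fin.lt_iff_val_lt_val.mp h; omega
        rw [cons_eval_ne _ _ _ (by omega)]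
        show z _ = z _
        congr 1
        show _ = e _
        congr 1
        ext
        rw [cyc1_val]
        simp only [emb1, embA, hv1]
        have := Fin.lt_iff_val_lt_val.mp h
        split_ifs <;> omega
      · -- a > j'
        rw [Fin.cycleRange_of_gt h]
        rw [cons_eval_ne _ _ _ ha0]
        show z _ = z _
        congr 1
        show _ = e _
        congr 1
        ext
        rw [cyc1_val]
        have := Fin.lt_iff_val_lt_val.mp h
        split_ifs <;> simp only [emb1, embA] at * <;> omega

lemma tauB (e : Perm (Fin (p + 1 + q))) (j' : Fin (p + 1)) :
    (fun b : Fin (q + 1) => Fin.cons (α := fun _ => V) v z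
        ((ins (p + 1 + q) (embA p q j') e) (embB p q b)))
    = fun b => z ((e * cyc1 p q j') (embP p q b)) := by
  have hjp : j'.val < p + 1 := j'.isLt
  funext b
  have hbq : b.val < q + 1 := b.isLt
  simp only [ins, Equiv.Perm.mul_apply]
  have h2 : embB p q b ≠ (0 : Fin (p + 1 + q + 1)) :=
    fun h => by simpa [embB] using congrArg Fin.val h
  have h3 : embB p q b ≠ embA p q j' :=
    fun h => by have := congrArg Fin.val h; simp [embA, embB] at this; omega
  rw [Equiv.swap_apply_of_ne_of_ne h2 h3,
    d0_apply_ne e _ (by simp [embB]), Fin.cons_succ]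
  show z _ = z _
  congr 1
  show _ = e _
  congr 1
  ext
  rw [cyc1_val]
  split_ifs <;> simp only [emb1, embB, embP] at * <;> omega

lemma psiA (e : Perm (Fin (p + 1 + q))) (j'' : Fin (q + 1)) :
    (fun a : Fin (p + 1) => Fin.cons (α := fun _ => V) v z
        ((ins (p + 1 + q) (embB p q j'') e) (embA p q a)))
    = fun a => z ((e * cyc2 p q j'') (emb2 p q a)) := by
  have hjq : j''.val < q + 1 := j''.isLt
  funext a
  have hap : a.val < p + 1 := a.isLt
  simp only [ins, Equiv.Perm.mul_apply]
  rcases eq_or_ne a.val 0 with ha0 | ha0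
  · have h1 : embA p q a = (0 : Fin (p + 1 + q + 1)) := Fin.ext (by simpa [embA] using ha0)
    rw [h1, Equiv.swap_apply_left,
      d0_apply_ne e _ (by simp [embB]), Fin.cons_succ]
    show z _ = z _
    congr 1
    show _ = e _
    congr 1
    ext
    rw [cyc2_val]
    split_ifs <;> simp only [emb2, embB] at * <;> omega
  · have h2 : embA p q a ≠ (0 : Fin (p + 1 + q + 1)) :=
      fun h => ha0 (by simpa [embA] using congrArg Fin.val h)
    have h3 : embA p q a ≠ embB p q j'' :=
      fun h => by have := congrArg Fin.val h; simp [embA, embB] at this; omega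
    rw [Equiv.swap_apply_of_ne_of_ne h2 h3,
      d0_apply_ne e _ (by simpa [embA] using ha0), Fin.cons_succ]
    show z _ = z _
    congr 1
    show _ = e _
    congr 1
    ext
    rw [cyc2_val]
    split_ifs <;> simp only [emb2, embA] at * <;> omega

lemma psiB (e : Perm (Fin (p + 1 + q))) (j'' : Fin (q + 1)) :
    (fun b : Fin (q + 1) => Fin.cons (α := fun _ => V) v z
        ((ins (p + 1 + q) (embB p q j'') e) (embB p q b)))
    = (Fin.cons v (fun t : Fin q => z ((e * cyc2 p q j'') (embQ p q t)))) ∘ (Fin.cycleRange j'') := by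
  have hjq : j''.val < q + 1 := j''.isLt
  funext b
  have hbq : b.val < q + 1 := b.isLt
  simp only [Function.comp_apply, ins, Equiv.Perm.mul_apply]
  rcases eq_or_ne b j'' with rfl | hbj
  · rw [Equiv.swap_apply_right, d0_zero, Fin.cycleRange_self,
      cons_eval_zero _ _ _ rfl, cons_eval_zero _ _ _ rfl]
  · have hbvj : b.val ≠ j''.val := fun h => hbj (Fin.ext h)
    have h2 : embB p q b ≠ (0 : Fin (p + 1 + q + 1)) :=
      fun h => by simpa [embB] using congrArg Fin.val h
    have h3 : embB p q b ≠ embB p q j'' :=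
      fun h => hbj (Fin.ext (by simpa [embB] using congrArg Fin.val h))
    rw [Equiv.swap_apply_of_ne_of_ne h2 h3,
      d0_apply_ne e _ (by simp [embB]), Fin.cons_succ]
    rcases lt_or_gt_of_ne hbj with h | h
    · -- b < j''
      rw [Fin.cycleRange_of_lt h]
      have hv1 : (b + 1 : Fin (q + 1)).val = b.val + 1 := by
        rw [Fin.val_add_one_of_lt]
        rw [Fin.lt_iff_val_lt_val]; simp only [Fin.val_last]
        have := Fin.lt_iff_val_lt_val.mp h; omega
      rw [cons_eval_ne _ _ _ (by omega)]
      show z _ = z _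
      congr 1
      show _ = e _
      congr 1
      ext
      rw [cyc2_val]
      simp only [embQ, embB, hv1]
      have := Fin.lt_iff_val_lt_val.mp h
      split_ifs <;> omega
    · -- b > j''
      rw [Fin.cycleRange_of_gt h]
      rw [cons_eval_ne _ _ _ (by omega)]
      show z _ = z _
      congr 1
      show _ = e _
      congr 1
      ext
      rw [cyc2_val]
      have := Fin.lt_iff_val_lt_val.mp h
      split_ifs <;> simp only [embQ, embB] at * <;> omega

lemma negOnePowK (n : ℕ) : ((((-1 : ℤˣ) ^ n : ℤˣ) : ℤ) : K) = (-1 : K) ^ n := by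
  rw [Units.val_pow_eq_pow_val]
  push_cast
  norm_num

variable {τ : V [⋀^Fin (p + 1)]→ₗ[K] K} {ψ : V [⋀^Fin (q + 1)]→ₗ[K] W}

def innerTerm (p q : ℕ) (τ : V [⋀^Fin (p + 1)]→ₗ[K] K) (ψ : V [⋀^Fin (q + 1)]→ₗ[K] W)
    (v : V) (z : Fin (p + 1 + q) → V) (ρ : Perm (Fin (p + 1 + q + 1))) : W :=
  ((Perm.sign ρ : ℤ) : K) •
    (τ (fun a => Fin.cons (α := fun _ => V) v z (ρ (embA p q a))) •
      ψ (fun b => Fin.cons (α := fun _ => V) v z (ρ (embB p q b))))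

def sTau (p q : ℕ) (τ : V [⋀^Fin (p + 1)]→ₗ[K] K) (ψ : V [⋀^Fin (q + 1)]→ₗ[K] W)
    (v : V) (z : Fin (p + 1 + q) → V) : W :=
  ∑ e : Perm (Fin (p + 1 + q)), ((Perm.sign e : ℤ) : K) •
    (τ (Fin.cons v (fun t => z (e (emb1 p q t)))) •
      ψ (fun b => z (e (embP p q b))))

def sPsi (p q : ℕ) (τ : V [⋀^Fin (p + 1)]→ₗ[K] K) (ψ : V [⋀^Fin (q + 1)]→ₗ[K] W)
    (v : V) (z : Fin (p + 1 + q) → V) : W :=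
  ∑ e : Perm (Fin (p + 1 + q)), ((Perm.sign e : ℤ) : K) •
    (τ (fun a => z (e (emb2 p q a))) •
      ψ (Fin.cons v (fun t => z (e (embQ p q t)))))

lemma sgnK_ins_tau (e : Perm (Fin (p + 1 + q))) (j' : Fin (p + 1)) :
    ((Perm.sign (ins (p + 1 + q) (embA p q j') e) : ℤ) : K)
        * ((Perm.sign (Fin.cycleRange j') : ℤ) : K)
      = ((Perm.sign (e * cyc1 p q j') : ℤ) : K) := by
  rw [ins, sgnK_mul, sgnK_mul, sign_d0, Fin.sign_cycleRange, sign_cyc1, negOnePowK, negOnePowK]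
  rcases eq_or_ne j'.val 0 with hj0 | hj0
  · have h1 : embA p q j' = (0 : Fin (p + 1 + q + 1)) := Fin.ext (by simpa [embA] using hj0)
    rw [h1, Equiv.swap_self]
    have h2 : Perm.sign (Equiv.refl (Fin (p + 1 + q + 1)) : Perm (Fin (p + 1 + q + 1))) = 1 :=
      Equiv.Perm.sign_refl
    rw [h2, hj0]
    norm_num
  · have h1 : (0 : Fin (p + 1 + q + 1)) ≠ embA p q j' := by
      intro h
      exact hj0 (by simpa [embA] using (congrArg Fin.val h).symm)
    rw [Equiv.Perm.sign_swap h1]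
    obtain ⟨m, hm⟩ : ∃ m, j'.val = m + 1 := ⟨j'.val - 1, by omega⟩
    rw [hm, show m + 1 - 1 = m from by omega, pow_succ]
    push_cast
    ring

lemma sgnK_ins_psi (e : Perm (Fin (p + 1 + q))) (j'' : Fin (q + 1)) :
    ((Perm.sign (ins (p + 1 + q) (embB p q j'') e) : ℤ) : K)
        * ((Perm.sign (Fin.cycleRange j'') : ℤ) : K)
      = (-1 : K) ^ (p + 1) * ((Perm.sign (e * cyc2 p q j'') : ℤ) : K) := by
  rw [ins, sgnK_mul, sgnK_mul, sign_d0, Fin.sign_cycleRange, sign_cyc2, negOnePowK, negOnePowK]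
  have h1 : (0 : Fin (p + 1 + q + 1)) ≠ embB p q j'' := by
    intro h
    have := congrArg Fin.val h
    simp [embB] at this
    omega
  rw [Equiv.Perm.sign_swap h1]
  push_cast
  have key : (-1 : K) ^ (p + 1) * (-1 : K) ^ (p + j''.val) = -(-1 : K) ^ j''.val := by
    rw [← pow_add, show p + 1 + (p + j''.val) = 2 * p + (1 + j''.val) from by ring, pow_add,
      pow_mul, pow_add]
    norm_num
  linear_combination (-((Perm.sign e : ℤ) : K)) * key

lemma tau_case (v : V) (z : Fin (p + 1 + q) → V) (j' : Fin (p + 1)) :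
    ∑ e : Perm (Fin (p + 1 + q)), innerTerm p q τ ψ v z (ins (p + 1 + q) (embA p q j') e)
      = sTau p q τ ψ v z := by
  have key : ∀ e : Perm (Fin (p + 1 + q)),
      innerTerm p q τ ψ v z (ins (p + 1 + q) (embA p q j') e)
        = ((Perm.sign (e * cyc1 p q j') : ℤ) : K) •
            (τ (Fin.cons v (fun t => z ((e * cyc1 p q j') (emb1 p q t)))) •
              ψ (fun b => z ((e * cyc1 p q j') (embP p q b)))) := by
    intro e
    simp only [innerTerm]
    rw [tauA, tauB, AlternatingMap.map_perm, Units.smul_def, ← Int.cast_smul_eq_zsmul K]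
    simp only [smul_eq_mul, smul_smul]
    congr 1
    linear_combination (τ (Fin.cons v (fun t => z ((e * cyc1 p q j') (emb1 p q t)))))
      * sgnK_ins_tau (K := K) e j'
  rw [Finset.sum_congr rfl (fun e _ => key e)]
  exact sum_mulRight (cyc1 p q j') (fun e => ((Perm.sign e : ℤ) : K) •
    (τ (Fin.cons v (fun t => z (e (emb1 p q t)))) • ψ (fun b => z (e (embP p q b)))))

lemma psi_case (v : V) (z : Fin (p + 1 + q) → V) (j'' : Fin (q + 1)) :
    ∑ e : Perm (Fin (p + 1 + q)), innerTerm p q τ ψ v z (ins (p + 1 + q) (embB p q j'') e)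
      = ((-1 : K) ^ (p + 1)) • sPsi p q τ ψ v z := by
  have key : ∀ e : Perm (Fin (p + 1 + q)),
      innerTerm p q τ ψ v z (ins (p + 1 + q) (embB p q j'') e)
        = ((-1 : K) ^ (p + 1)) • ((Perm.sign (e * cyc2 p q j'') : ℤ) : K) •
            (τ (fun a => z ((e * cyc2 p q j'') (emb2 p q a))) •
              ψ (Fin.cons v (fun t => z ((e * cyc2 p q j'') (embQ p q t))))) := by
    intro e
    simp only [innerTerm]
    rw [psiA, psiB, AlternatingMap.map_perm, Units.smul_def, ← Int.cast_smul_eq_zsmul K]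
    simp only [smul_smul]
    congr 1
    linear_combination (τ (fun a => z ((e * cyc2 p q j'') (emb2 p q a))))
      * sgnK_ins_psi (K := K) e j''
  rw [Finset.sum_congr rfl (fun e _ => key e), ← Finset.smul_sum]
  congr 1
  exact sum_mulRight (cyc2 p q j'') (fun e => ((Perm.sign e : ℤ) : K) •
    (τ (fun a => z (e (emb2 p q a))) • ψ (Fin.cons v (fun t => z (e (embQ p q t))))))

lemma inner_split (v : V) (z : Fin (p + 1 + q) → V) :
    ∑ ρ : Perm (Fin (p + 1 + q + 1)), innerTerm p q τ ψ v z ρ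
      = (((p + 1 : ℕ) : K)) • sTau p q τ ψ v z
        + (((q + 1 : ℕ) : K) * (-1 : K) ^ (p + 1)) • sPsi p q τ ψ v z := by
  have h1 : ∑ ρ : Perm (Fin (p + 1 + q + 1)), innerTerm p q τ ψ v z ρ
      = ∑ je : Fin (p + 1 + q + 1) × Perm (Fin (p + 1 + q)),
          innerTerm p q τ ψ v z (ins (p + 1 + q) je.1 je.2) :=
    (Fintype.sum_bijective _ (ins_bijective (p + 1 + q))
      (fun je => innerTerm p q τ ψ v z (ins (p + 1 + q) je.1 je.2))
      (fun ρ => innerTerm p q τ ψ v z ρ) (fun je => rfl)).symm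
  rw [h1, Fintype.sum_prod_type]
  have hh : (p + 1) + (q + 1) = p + 1 + q + 1 := by omega
  have h2 : ∑ j : Fin (p + 1 + q + 1), ∑ e : Perm (Fin (p + 1 + q)),
        innerTerm p q τ ψ v z (ins (p + 1 + q) j e)
      = ∑ j : Fin ((p + 1) + (q + 1)), ∑ e : Perm (Fin (p + 1 + q)),
          innerTerm p q τ ψ v z (ins (p + 1 + q) (Fin.cast hh j) e) :=
    (Fintype.sum_equiv (finCongr hh)
      (fun j => ∑ e : Perm (Fin (p + 1 + q)),
        innerTerm p q τ ψ v z (ins (p + 1 + q) (Fin.cast hh j) e))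
      (fun j => ∑ e : Perm (Fin (p + 1 + q)),
        innerTerm p q τ ψ v z (ins (p + 1 + q) j e)) (fun j => rfl)).symm
  rw [h2, Fin.sum_univ_add]
  have h3 : ∑ j' : Fin (p + 1), ∑ e : Perm (Fin (p + 1 + q)),
        innerTerm p q τ ψ v z (ins (p + 1 + q) (Fin.cast hh (Fin.castAdd (q + 1) j')) e)
      = ∑ j' : Fin (p + 1), sTau p q τ ψ v z :=
    Finset.sum_congr rfl (fun j' _ => tau_case v z j')
  have h4 : ∑ j'' : Fin (q + 1), ∑ e : Perm (Fin (p + 1 + q)),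
        innerTerm p q τ ψ v z (ins (p + 1 + q) (Fin.cast hh (Fin.natAdd (p + 1) j'')) e)
      = ∑ j'' : Fin (q + 1), ((-1 : K) ^ (p + 1)) • sPsi p q τ ψ v z :=
    Finset.sum_congr rfl (fun j'' _ => psi_case v z j'')
  rw [h3, h4, Finset.sum_const, Finset.sum_const, Finset.card_univ, Finset.card_univ,
    Fintype.card_fin, Fintype.card_fin, Nat.cast_smul_eq_nsmul, mul_smul,
    Nat.cast_smul_eq_nsmul]

end inner

section Outer

variable [CharZero K] {k p q : ℕ}

def coreT (k p q : ℕ) (φ : V [⋀^Fin (k + 1)]→ₗ[K] V) (τ : V [⋀^Fin (p + 1)]→ₗ[K] K)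
    (ψ : V [⋀^Fin (q + 1)]→ₗ[K] W) : (Fin ((k + 1) + (p + 1 + q)) → V) → W := fun u =>
  τ (Fin.cons (φ (fun i => u (Fin.castAdd (p + 1 + q) i)))
      (fun t => u (Fin.natAdd (k + 1) (emb1 p q t)))) •
    ψ (fun b => u (Fin.natAdd (k + 1) (embP p q b)))

def coreE (k p q : ℕ) (φ : V [⋀^Fin (k + 1)]→ₗ[K] V) (τ : V [⋀^Fin (p + 1)]→ₗ[K] K)
    (ψ : V [⋀^Fin (q + 1)]→ₗ[K] W) : (Fin ((k + 1) + (p + 1 + q)) → V) → W := fun u =>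
  τ (fun a => u (Fin.natAdd (k + 1) (emb2 p q a))) •
    ψ (Fin.cons (φ (fun i => u (Fin.castAdd (p + 1 + q) i)))
        (fun t => u (Fin.natAdd (k + 1) (embQ p q t))))

def Ep (k p q : ℕ) (φ : V [⋀^Fin (k + 1)]→ₗ[K] V) (τ : V [⋀^Fin (p + 1)]→ₗ[K] K)
    (ψ : V [⋀^Fin (q + 1)]→ₗ[K] W) (x : Fin ((k + 1) + (p + 1 + q)) → V) : W :=
  ∑ σ : Perm (Fin ((k + 1) + (p + 1 + q))), ((Perm.sign σ : ℤ) : K) •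
    coreT k p q φ τ ψ (fun i => x (σ i))

def Ee (k p q : ℕ) (φ : V [⋀^Fin (k + 1)]→ₗ[K] V) (τ : V [⋀^Fin (p + 1)]→ₗ[K] K)
    (ψ : V [⋀^Fin (q + 1)]→ₗ[K] W) (x : Fin ((k + 1) + (p + 1 + q)) → V) : W :=
  ∑ σ : Perm (Fin ((k + 1) + (p + 1 + q))), ((Perm.sign σ : ℤ) : K) •
    coreE k p q φ τ ψ (fun i => x (σ i))

variable (φ : V [⋀^Fin (k + 1)]→ₗ[K] V) (τ : V [⋀^Fin (p + 1)]→ₗ[K] K)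
  (ψ : V [⋀^Fin (q + 1)]→ₗ[K] W)

lemma absT (x : Fin ((k + 1) + (p + 1 + q)) → V) :
    ∑ σ : Perm (Fin ((k + 1) + (p + 1 + q))), ((Perm.sign σ : ℤ) : K) •
        sTau p q τ ψ (φ (fun i => x (σ (Fin.castAdd (p + 1 + q) i))))
          (fun t => x (σ (Fin.natAdd (k + 1) t)))
      = (((p + 1 + q).factorial : K)) • Ep k p q φ τ ψ x := by
  have hs : ∀ σ : Perm (Fin ((k + 1) + (p + 1 + q))),
      ((Perm.sign σ : ℤ) : K) • sTau p q τ ψ (φ (fun i => x (σ (Fin.castAdd (p + 1 + q) i))))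
          (fun t => x (σ (Fin.natAdd (k + 1) t)))
        = ∑ e : Perm (Fin (p + 1 + q)), ((Perm.sign σ : ℤ) : K) • ((Perm.sign e : ℤ) : K) •
            coreT k p q φ τ ψ (fun i => x (σ (liftR (k + 1) (p + 1 + q) e i))) := by
    intro σ
    rw [sTau, Finset.smul_sum]
    refine Finset.sum_congr rfl fun e _ => ?_
    congr 1
    congr 1
    simp only [coreT, liftR_castAdd, liftR_natAdd]
  rw [Finset.sum_congr rfl (fun σ _ => hs σ),
    absorb_right (k + 1) (p + 1 + q) (coreT k p q φ τ ψ) x]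
  rfl

lemma absE (x : Fin ((k + 1) + (p + 1 + q)) → V) :
    ∑ σ : Perm (Fin ((k + 1) + (p + 1 + q))), ((Perm.sign σ : ℤ) : K) •
        sPsi p q τ ψ (φ (fun i => x (σ (Fin.castAdd (p + 1 + q) i))))
          (fun t => x (σ (Fin.natAdd (k + 1) t)))
      = (((p + 1 + q).factorial : K)) • Ee k p q φ τ ψ x := by
  have hs : ∀ σ : Perm (Fin ((k + 1) + (p + 1 + q))),
      ((Perm.sign σ : ℤ) : K) • sPsi p q τ ψ (φ (fun i => x (σ (Fin.castAdd (p + 1 + q) i))))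
          (fun t => x (σ (Fin.natAdd (k + 1) t)))
        = ∑ e : Perm (Fin (p + 1 + q)), ((Perm.sign σ : ℤ) : K) • ((Perm.sign e : ℤ) : K) •
            coreE k p q φ τ ψ (fun i => x (σ (liftR (k + 1) (p + 1 + q) e i))) := by
    intro σ
    rw [sPsi, Finset.smul_sum]
    refine Finset.sum_congr rfl fun e _ => ?_
    congr 1
    congr 1
    simp only [coreE, liftR_castAdd, liftR_natAdd]
  rw [Finset.sum_congr rfl (fun σ _ => hs σ),
    absorb_right (k + 1) (p + 1 + q) (coreE k p q φ τ ψ) x]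
  rfl

lemma lhs_eq (x : Fin ((k + 1) + (p + 1 + q)) → V) :
    interiorProd (K := K) (k + 1) (p + 1 + q) ⇑φ (wedgeProd (K := K) (p + 1) (q + 1) ⇑τ ⇑ψ) x
      = ((((k + 1).factorial : K) * ((p).factorial : K) * (((q + 1)).factorial : K))⁻¹) •
          Ep k p q φ τ ψ x
        + ((-1 : K) ^ (p + 1) *
            (((k + 1).factorial : K) * (((p + 1)).factorial : K) * ((q).factorial : K))⁻¹) •
          Ee k p q φ τ ψ x := by
  have h0 : interiorProd (K := K) (k + 1) (p + 1 + q) ⇑φ (wedgeProd (K := K) (p + 1) (q + 1) ⇑τ ⇑ψ) x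
      = (((k + 1).factorial * (p + 1 + q).factorial : K))⁻¹ •
          ∑ σ : Perm (Fin ((k + 1) + (p + 1 + q))), ((Perm.sign σ : ℤ) : K) •
            ((((p + 1).factorial * (q + 1).factorial : K))⁻¹ •
              ∑ ρ : Perm (Fin (p + 1 + q + 1)),
                innerTerm p q τ ψ (φ (fun i => x (σ (Fin.castAdd (p + 1 + q) i))))
                  (fun t => x (σ (Fin.natAdd (k + 1) t))) ρ) := rfl
  rw [h0]
  have h1 : ∀ σ : Perm (Fin ((k + 1) + (p + 1 + q))),
      ((Perm.sign σ : ℤ) : K) •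
          ((((p + 1).factorial * (q + 1).factorial : K))⁻¹ •
            ∑ ρ : Perm (Fin (p + 1 + q + 1)),
              innerTerm p q τ ψ (φ (fun i => x (σ (Fin.castAdd (p + 1 + q) i))))
                (fun t => x (σ (Fin.natAdd (k + 1) t))) ρ)
        = ((((p + 1).factorial * (q + 1).factorial : K))⁻¹ * ((p + 1 : ℕ) : K)) •
            (((Perm.sign σ : ℤ) : K) • sTau p q τ ψ
              (φ (fun i => x (σ (Fin.castAdd (p + 1 + q) i))))
              (fun t => x (σ (Fin.natAdd (k + 1) t))))
          + ((((p + 1).factorial * (q + 1).factorial : K))⁻¹ *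
              (((q + 1 : ℕ) : K) * (-1 : K) ^ (p + 1))) •
            (((Perm.sign σ : ℤ) : K) • sPsi p q τ ψ
              (φ (fun i => x (σ (Fin.castAdd (p + 1 + q) i))))
              (fun t => x (σ (Fin.natAdd (k + 1) t)))) := by
    intro σ
    rw [inner_split]
    rw [smul_add, smul_add]
    simp only [smul_smul]
    congr 2
    · ring
    · ring
  rw [Finset.sum_congr rfl (fun σ _ => h1 σ), Finset.sum_add_distrib,
    ← Finset.smul_sum, ← Finset.smul_sum, absT, absE]
  have nz : ∀ n : ℕ, ((n.factorial : K)) ≠ 0 :=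
    fun n => Nat.cast_ne_zero.mpr (Nat.factorial_ne_zero n)
  rw [smul_add, smul_smul, smul_smul, smul_smul, smul_smul]
  have n1 := nz (k + 1)
  have n2 := nz (p + 1 + q)
  have n3 := nz p
  have n4 := nz q
  have n5 := nz (p + 1)
  have n6 := nz (q + 1)
  congr 2
  · rw [Nat.factorial_succ p]
    rw [Nat.factorial_succ p] at n5
    push_cast at n5 ⊢
    field_simp
  · rw [Nat.factorial_succ q]
    rw [Nat.factorial_succ q] at n6
    push_cast at n6 ⊢
    field_simp

def core1 (k p q : ℕ) (φ : V [⋀^Fin (k + 1)]→ₗ[K] V) (τ : V [⋀^Fin (p + 1)]→ₗ[K] K)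
    (ψ : V [⋀^Fin (q + 1)]→ₗ[K] W) : (Fin (((k + 1) + p) + (q + 1)) → V) → W := fun u =>
  τ (Fin.cons (φ (fun i => u (Fin.castAdd (q + 1) (Fin.castAdd p i))))
      (fun t => u (Fin.castAdd (q + 1) (Fin.natAdd (k + 1) t)))) •
    ψ (fun b => u (Fin.natAdd ((k + 1) + p) b))

lemma rhs1_eq (x : Fin ((k + 1) + (p + 1 + q)) → V)
    (hc : ((k + 1) + p) + (q + 1) = (k + 1) + (p + 1 + q)) :
    wedgeProd (K := K) ((k + 1) + p) (q + 1) (interiorProd (K := K) (k + 1) p ⇑φ ⇑τ) ⇑ψ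
        (x ∘ Fin.cast hc)
      = ((((k + 1).factorial : K) * ((p).factorial : K) * (((q + 1)).factorial : K))⁻¹) •
          Ep k p q φ τ ψ x := by
  have h0 : wedgeProd (K := K) ((k + 1) + p) (q + 1) (interiorProd (K := K) (k + 1) p ⇑φ ⇑τ) ⇑ψ
        (x ∘ Fin.cast hc)
      = ((((k + 1) + p).factorial * (q + 1).factorial : K))⁻¹ •
          ∑ σ : Perm (Fin (((k + 1) + p) + (q + 1))), ((Perm.sign σ : ℤ) : K) •
            (((((k + 1).factorial * p.factorial : K))⁻¹ •
              ∑ ρ : Perm (Fin ((k + 1) + p)), ((Perm.sign ρ : ℤ) : K) •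
                τ (Fin.cons (φ (fun i =>
                      (x ∘ Fin.cast hc) (σ (Fin.castAdd (q + 1) (ρ (Fin.castAdd p i))))))
                    (fun t =>
                      (x ∘ Fin.cast hc) (σ (Fin.castAdd (q + 1) (ρ (Fin.natAdd (k + 1) t)))))))
              • ψ (fun b => (x ∘ Fin.cast hc) (σ (Fin.natAdd ((k + 1) + p) b)))) := rfl
  rw [h0]
  have h1 : ∀ σ : Perm (Fin (((k + 1) + p) + (q + 1))),
      ((Perm.sign σ : ℤ) : K) •
          (((((k + 1).factorial * p.factorial : K))⁻¹ •
            ∑ ρ : Perm (Fin ((k + 1) + p)), ((Perm.sign ρ : ℤ) : K) •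
              τ (Fin.cons (φ (fun i =>
                    (x ∘ Fin.cast hc) (σ (Fin.castAdd (q + 1) (ρ (Fin.castAdd p i))))))
                  (fun t =>
                    (x ∘ Fin.cast hc) (σ (Fin.castAdd (q + 1) (ρ (Fin.natAdd (k + 1) t)))))))
            • ψ (fun b => (x ∘ Fin.cast hc) (σ (Fin.natAdd ((k + 1) + p) b))))
        = (((k + 1).factorial * p.factorial : K))⁻¹ •
            ∑ ρ : Perm (Fin ((k + 1) + p)), ((Perm.sign σ : ℤ) : K) • ((Perm.sign ρ : ℤ) : K) •
              core1 k p q φ τ ψ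
                (fun i => (x ∘ Fin.cast hc) (σ (liftL ((k + 1) + p) (q + 1) ρ i))) := by
    intro σ
    rw [smul_eq_mul, mul_smul,
      smul_comm ((Perm.sign σ : ℤ) : K) ((((k + 1).factorial * p.factorial : K))⁻¹)]
    congr 1
    rw [Finset.sum_smul, Finset.smul_sum]
    refine Finset.sum_congr rfl fun ρ _ => ?_
    congr 1
    rw [smul_assoc]
    congr 1
    simp only [core1, liftL_castAdd, liftL_natAdd]
  rw [Finset.sum_congr rfl (fun σ _ => h1 σ), ← Finset.smul_sum,
    absorb_left ((k + 1) + p) (q + 1) (core1 k p q φ τ ψ) (x ∘ Fin.cast hc)]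
  have htrans : ∑ σ : Perm (Fin (((k + 1) + p) + (q + 1))), ((Perm.sign σ : ℤ) : K) •
        core1 k p q φ τ ψ (fun i => (x ∘ Fin.cast hc) (σ i))
      = Ep k p q φ τ ψ x := by
    refine Fintype.sum_equiv ((finCongr hc).permCongr) _ _ (fun σ => ?_)
    rw [Equiv.Perm.sign_permCongr]
    congr 1
    simp only [core1, coreT, Equiv.permCongr_apply, finCongr_symm, finCongr_apply,
      Function.comp_apply]
    refine congrArg₂ (fun (c : K) (w : W) => c • w) (congrArg _ ?_) (congrArg _ ?_)
    · refine congrArg₂ (fun v r => Fin.cons (α := fun _ => V) v r) (congrArg _ ?_) ?_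
      · funext i
        exact congrArg (fun s => x (Fin.cast hc (σ s))) (Fin.ext (by simp))
      · funext t
        exact congrArg (fun s => x (Fin.cast hc (σ s))) (Fin.ext (by simp [emb1]))
    · funext b
      exact congrArg (fun s => x (Fin.cast hc (σ s))) (Fin.ext (by simp [embP]; omega))
  rw [htrans, smul_smul, smul_smul]
  congr 1
  have nz : ∀ n : ℕ, ((n.factorial : K)) ≠ 0 :=
    fun n => Nat.cast_ne_zero.mpr (Nat.factorial_ne_zero n)
  have n1 := nz ((k + 1) + p)
  have n2 := nz (q + 1)
  have n3 := nz (k + 1)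
  have n4 := nz p
  field_simp

def core2 (k p q : ℕ) (φ : V [⋀^Fin (k + 1)]→ₗ[K] V) (τ : V [⋀^Fin (p + 1)]→ₗ[K] K)
    (ψ : V [⋀^Fin (q + 1)]→ₗ[K] W) : (Fin ((p + 1) + ((k + 1) + q)) → V) → W := fun u =>
  τ (fun a => u (Fin.castAdd ((k + 1) + q) a)) •
    ψ (Fin.cons (φ (fun i => u (Fin.natAdd (p + 1) (Fin.castAdd q i))))
        (fun t => u (Fin.natAdd (p + 1) (Fin.natAdd (k + 1) t))))

def mm1 (k p q : ℕ) : Fin (p + 1) → Fin ((k + 1) + (p + 1 + q)) :=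
  fun a => ⟨a.val, by have := a.isLt; omega⟩
def mm2 (k p q : ℕ) : Fin (k + 1) → Fin ((k + 1) + (p + 1 + q)) :=
  fun i => ⟨p + 1 + i.val, by have := i.isLt; omega⟩
def mm3 (k p q : ℕ) : Fin q → Fin ((k + 1) + (p + 1 + q)) :=
  fun t => ⟨p + 1 + (k + 1) + t.val, by have := t.isLt; omega⟩

def core2N (k p q : ℕ) (φ : V [⋀^Fin (k + 1)]→ₗ[K] V) (τ : V [⋀^Fin (p + 1)]→ₗ[K] K)
    (ψ : V [⋀^Fin (q + 1)]→ₗ[K] W) : (Fin ((k + 1) + (p + 1 + q)) → V) → W := fun u =>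
  τ (fun a => u (mm1 k p q a)) •
    ψ (Fin.cons (φ (fun i => u (mm2 k p q i))) (fun t => u (mm3 k p q t)))

def rotN (k p q : ℕ) : Perm (Fin ((k + 1) + (p + 1 + q))) :=
  (finCongr (by omega : (k + p + 1 + 1) + q = (k + 1) + (p + 1 + q))).permCongr
    (liftL (k + p + 1 + 1) q ((finRotate (k + p + 1 + 1)) ^ (p + 1)))

lemma rotN_val {k p q : ℕ} (s : Fin ((k + 1) + (p + 1 + q))) :
    ((rotN k p q) s).val
      = if s.val < k + p + 1 + 1 then (s.val + (p + 1)) % (k + p + 1 + 1) else s.val := by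
  rw [rotN]
  simp only [Equiv.permCongr_apply, finCongr_symm, finCongr_apply]
  rw [Fin.coe_cast, liftL_apply_val]
  simp only [Fin.coe_cast]
  split_ifs with h
  · rw [finRotate_pow_val]
  · rfl

lemma sign_rotN_K {k p q : ℕ} :
    ((Perm.sign (rotN k p q) : ℤ) : K) = (-1 : K) ^ ((k + p + 1) * (p + 1)) := by
  rw [rotN, Equiv.Perm.sign_permCongr, sign_liftL, map_pow, sign_finRotate, ← pow_mul,
    negOnePowK, Nat.add_sub_cancel]

lemma beta_step (x : Fin ((k + 1) + (p + 1 + q)) → V) :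
    ∑ σ : Perm (Fin ((k + 1) + (p + 1 + q))), ((Perm.sign σ : ℤ) : K) •
        core2N k p q φ τ ψ (fun i => x (σ i))
      = ((Perm.sign (rotN k p q) : ℤ) : K) • Ee k p q φ τ ψ x := by
  show _ = ((Perm.sign (rotN k p q) : ℤ) : K) •
    ∑ σ : Perm (Fin ((k + 1) + (p + 1 + q))), ((Perm.sign σ : ℤ) : K) •
      coreE k p q φ τ ψ (fun i => x (σ i))
  rw [← sum_sgn_smul_mul (rotN k p q)
    (fun π => coreE k p q φ τ ψ (fun i => x (π i)))]
  refine Finset.sum_congr rfl fun σ _ => ?_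
  congr 1
  simp only [core2N, coreE, Equiv.Perm.mul_apply]
  refine congrArg₂ (fun (c : K) (w : W) => c • w) (congrArg _ ?_) (congrArg _ ?_)
  · funext a
    refine congrArg (fun s => x (σ s)) (Fin.ext ?_)
    rw [rotN_val]
    simp only [mm1, Fin.coe_natAdd, emb2]
    simp only [show k + 1 + (a : ℕ) < k + p + 1 + 1 from by have := a.isLt; omega, ↓reduceIte]
    rw [
      show k + 1 + ↑a + (p + 1) = (k + p + 1 + 1) + ↑a from by omega,
      Nat.add_mod_left, Nat.mod_eq_of_lt (by have := a.isLt; omega)]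
  · refine congrArg₂ (fun v r => Fin.cons (α := fun _ => V) v r) (congrArg _ ?_) ?_
    · funext i
      refine congrArg (fun s => x (σ s)) (Fin.ext ?_)
      rw [rotN_val]
      simp only [mm2, Fin.coe_castAdd]
      rw [if_pos (by have := i.isLt; omega),
        Nat.mod_eq_of_lt (by have := i.isLt; omega)]
      omega
    · funext t
      refine congrArg (fun s => x (σ s)) (Fin.ext ?_)
      rw [rotN_val]
      simp only [mm3, Fin.coe_natAdd, embQ]
      simp only [show ¬ (k + 1 + (p + 1 + (t : ℕ)) < k + p + 1 + 1) from by omega, ↓reduceIte]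
      omega

lemma rhs2_eq (x : Fin ((k + 1) + (p + 1 + q)) → V)
    (hc : (p + 1) + ((k + 1) + q) = (k + 1) + (p + 1 + q)) :
    wedgeProd (K := K) (p + 1) ((k + 1) + q) ⇑τ (interiorProd (K := K) (k + 1) q ⇑φ ⇑ψ)
        (x ∘ Fin.cast hc)
      = ((-1 : K) ^ ((k + p + 1) * (p + 1)) *
          (((p + 1).factorial : K) * ((k + 1).factorial : K) * ((q).factorial : K))⁻¹) •
          Ee k p q φ τ ψ x := by
  have h0 : wedgeProd (K := K) (p + 1) ((k + 1) + q) ⇑τ (interiorProd (K := K) (k + 1) q ⇑φ ⇑ψ)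
        (x ∘ Fin.cast hc)
      = (((p + 1).factorial * ((k + 1) + q).factorial : K))⁻¹ •
          ∑ σ : Perm (Fin ((p + 1) + ((k + 1) + q))), ((Perm.sign σ : ℤ) : K) •
            (τ (fun a => (x ∘ Fin.cast hc) (σ (Fin.castAdd ((k + 1) + q) a))) •
              ((((k + 1).factorial * q.factorial : K))⁻¹ •
                ∑ ρ : Perm (Fin ((k + 1) + q)), ((Perm.sign ρ : ℤ) : K) •
                  ψ (Fin.cons (φ (fun i =>
                        (x ∘ Fin.cast hc) (σ (Fin.natAdd (p + 1) (ρ (Fin.castAdd q i))))))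
                      (fun t =>
                        (x ∘ Fin.cast hc) (σ (Fin.natAdd (p + 1) (ρ (Fin.natAdd (k + 1) t)))))))) := rfl
  rw [h0]
  have h1 : ∀ σ : Perm (Fin ((p + 1) + ((k + 1) + q))),
      ((Perm.sign σ : ℤ) : K) •
          (τ (fun a => (x ∘ Fin.cast hc) (σ (Fin.castAdd ((k + 1) + q) a))) •
            ((((k + 1).factorial * q.factorial : K))⁻¹ •
              ∑ ρ : Perm (Fin ((k + 1) + q)), ((Perm.sign ρ : ℤ) : K) •
                ψ (Fin.cons (φ (fun i =>
                      (x ∘ Fin.cast hc) (σ (Fin.natAdd (p + 1) (ρ (Fin.castAdd q i))))))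
                    (fun t =>
                      (x ∘ Fin.cast hc) (σ (Fin.natAdd (p + 1) (ρ (Fin.natAdd (k + 1) t))))))))
        = (((k + 1).factorial * q.factorial : K))⁻¹ •
            ∑ ρ : Perm (Fin ((k + 1) + q)), ((Perm.sign σ : ℤ) : K) • ((Perm.sign ρ : ℤ) : K) •
              core2 k p q φ τ ψ
                (fun i => (x ∘ Fin.cast hc) (σ (liftR (p + 1) ((k + 1) + q) ρ i))) := by
    intro σ
    rw [smul_comm (τ (fun a => (x ∘ Fin.cast hc) (σ (Fin.castAdd ((k + 1) + q) a))))
        ((((k + 1).factorial * q.factorial : K))⁻¹),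
      smul_comm ((Perm.sign σ : ℤ) : K) ((((k + 1).factorial * q.factorial : K))⁻¹)]
    congr 1
    rw [Finset.smul_sum, Finset.smul_sum]
    refine Finset.sum_congr rfl fun ρ _ => ?_
    congr 1
    rw [smul_comm (τ (fun a => (x ∘ Fin.cast hc) (σ (Fin.castAdd ((k + 1) + q) a))))
      ((Perm.sign ρ : ℤ) : K)]
    congr 1
    simp only [core2, liftR_castAdd, liftR_natAdd]
  rw [Finset.sum_congr rfl (fun σ _ => h1 σ), ← Finset.smul_sum,
    absorb_right (p + 1) ((k + 1) + q) (core2 k p q φ τ ψ) (x ∘ Fin.cast hc)]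
  have htrans : ∑ σ : Perm (Fin ((p + 1) + ((k + 1) + q))), ((Perm.sign σ : ℤ) : K) •
        core2 k p q φ τ ψ (fun i => (x ∘ Fin.cast hc) (σ i))
      = ∑ σ : Perm (Fin ((k + 1) + (p + 1 + q))), ((Perm.sign σ : ℤ) : K) •
          core2N k p q φ τ ψ (fun i => x (σ i)) := by
    refine Fintype.sum_equiv ((finCongr hc).permCongr) _ _ (fun σ => ?_)
    rw [Equiv.Perm.sign_permCongr]
    congr 1
    simp only [core2, core2N, Equiv.permCongr_apply, finCongr_symm, finCongr_apply,
      Function.comp_apply]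
    refine congrArg₂ (fun (c : K) (w : W) => c • w) (congrArg _ ?_) (congrArg _ ?_)
    · funext a
      exact congrArg (fun s => x (Fin.cast hc (σ s))) (Fin.ext (by simp [mm1]))
    · refine congrArg₂ (fun v r => Fin.cons (α := fun _ => V) v r) (congrArg _ ?_) ?_
      · funext i
        exact congrArg (fun s => x (Fin.cast hc (σ s))) (Fin.ext (by simp [mm2]))
      · funext t
        exact congrArg (fun s => x (Fin.cast hc (σ s))) (Fin.ext (by simp [mm3]; omega))
  rw [htrans, beta_step, sign_rotN_K, smul_smul, smul_smul, smul_smul]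
  congr 1
  have nz : ∀ n : ℕ, ((n.factorial : K)) ≠ 0 :=
    fun n => Nat.cast_ne_zero.mpr (Nat.factorial_ne_zero n)
  have n1 := nz (p + 1)
  have n2 := nz ((k + 1) + q)
  have n3 := nz (k + 1)
  have n4 := nz q
  field_simp

end Outer

end ILaux

/-- the Leibniz-type rule
i_φ(τ∧ψ) = (i_φ τ)∧ψ + (−1)^{(k−1)p} τ∧(i_φ ψ) for a vector-valued alternating
(k+1)-form φ, a scalar (p+1)-form τ and a (q+1)-form ψ. -/
theorem interior_leibniz (k p q : ℕ) (φ : V [⋀^Fin (k + 1)]→ₗ[K] V)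
    (τ : V [⋀^Fin (p + 1)]→ₗ[K] K) (ψ : V [⋀^Fin (q + 1)]→ₗ[K] W) :
    ∀ x : Fin ((k + 1) + (p + 1 + q)) → V,
      interiorProd (K := K) (k + 1) (p + 1 + q) ⇑φ
          (wedgeProd (K := K) (p + 1) (q + 1) ⇑τ ⇑ψ) x =
        wedgeProd (K := K) ((k + 1) + p) (q + 1)
            (interiorProd (K := K) (k + 1) p ⇑φ ⇑τ) ⇑ψ
            (x ∘ Fin.cast (by omega : ((k + 1) + p) + (q + 1) = (k + 1) + (p + 1 + q)))
          + (-1 : K) ^ (k * (p + 1)) •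
            wedgeProd (K := K) (p + 1) ((k + 1) + q) ⇑τ
              (interiorProd (K := K) (k + 1) q ⇑φ ⇑ψ)
              (x ∘ Fin.cast (by omega :
                (p + 1) + ((k + 1) + q) = (k + 1) + (p + 1 + q))) := by
  intro x
  rw [ILaux.lhs_eq, ILaux.rhs1_eq, ILaux.rhs2_eq]
  congr 1
  rw [smul_smul]
  congr 1
  have s1 : (-1 : K) ^ (k * (p + 1)) * (-1 : K) ^ ((k + p + 1) * (p + 1)) = (-1 : K) ^ (p + 1) := by
    rw [← pow_add,
      show k * (p + 1) + (k + p + 1) * (p + 1) = 2 * (k * (p + 1)) + (p * (p + 1) + (p + 1))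
        from by ring,
      pow_add, pow_add, pow_mul, Even.neg_one_pow (Nat.even_mul_succ_self p)]
    norm_num
  rw [← mul_assoc, s1]
  ring
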